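/- Let $0 < \lambda < N$ and let $f, g$ be nonnegative measurable functions on $\mathbb{R}^N$. With $(\Theta_B f)(x) = (r/|x-a|)^{2N-\lambda} f(\Theta_B(x))$ for the inversion $\Theta_B$ through the sphere of radius $r$ centered at $a$, one has the conformal invariance $\iint \frac{(\Theta_B f)(x)\,(\Theta_B g)(y)}{|x-y|^\lambda}\,dx\,dy = \iint \frac{f(x)\,g(y)}{|x-y|^\lambda}\,dx\,dy$. -/

import Mathlib

open MeasureTheory ENNReal

noncomputable def sphereInv {N : ℕ} (a : EuclideanSpace ℝ (Fin N)) (r : ℝ)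
    (x : EuclideanSpace ℝ (Fin N)) : EuclideanSpace ℝ (Fin N) :=
  (r ^ 2 / ‖x - a‖ ^ 2) • (x - a) + a

/-- The lift of the inversion to functions: `(Θ_B f)(x) = (r/|x-a|)^{2N-λ} f(Θ_B(x))`. -/
noncomputable def invLift {N : ℕ} (lam : ℝ) (a : EuclideanSpace ℝ (Fin N)) (r : ℝ)
    (f : EuclideanSpace ℝ (Fin N) → ℝ≥0∞) (x : EuclideanSpace ℝ (Fin N)) : ℝ≥0∞ :=
  ENNReal.ofReal ((r / ‖x - a‖) ^ (2 * (N : ℝ) - lam)) * f (sphereInv a r x)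

section Aux

open EuclideanGeometry Module

lemma sphereInv_eq_inversion {N : ℕ} (a : EuclideanSpace ℝ (Fin N)) (r : ℝ)
    (x : EuclideanSpace ℝ (Fin N)) : sphereInv a r x = inversion a r x := by
  simp only [sphereInv, inversion_def, vsub_eq_sub, vadd_eq_add, dist_eq_norm, div_pow]

lemma inversion_absDet {N : ℕ} (a : EuclideanSpace ℝ (Fin N)) {r : ℝ} (hr : 0 < r)
    {x : EuclideanSpace ℝ (Fin N)} (hx : x ≠ a) :
    |(((r / dist x a) ^ 2 • (Submodule.reflection (ℝ ∙ (x - a))ᗮ :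
        EuclideanSpace ℝ (Fin N) →L[ℝ] EuclideanSpace ℝ (Fin N))).det)| =
      (r / ‖x - a‖) ^ (2 * N) := by
  have hxa : x - a ≠ 0 := sub_ne_zero.2 hx
  rw [ContinuousLinearMap.det]
  simp only [ContinuousLinearMap.coe_smul]
  rw [LinearMap.det_smul]
  have h2 : LinearMap.det ((Submodule.reflection (ℝ ∙ (x - a))ᗮ :
      EuclideanSpace ℝ (Fin N) →L[ℝ] EuclideanSpace ℝ (Fin N)) :
      EuclideanSpace ℝ (Fin N) →ₗ[ℝ] EuclideanSpace ℝ (Fin N)) =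
      LinearMap.det (Submodule.reflection (ℝ ∙ (x - a))ᗮ).toLinearMap := rfl
  rw [h2, Submodule.det_reflection, Submodule.orthogonal_orthogonal, finrank_span_singleton hxa,
    pow_one, finrank_euclideanSpace_fin, dist_eq_norm]
  rw [abs_mul, abs_neg, abs_one, mul_one, ← pow_mul, abs_pow, abs_of_nonneg
    (div_nonneg hr.le (norm_nonneg _)), mul_comm 2 N]

/-- Change of variables under the inversion, on the complement of the center. -/
lemma inversion_cov {N : ℕ} (a : EuclideanSpace ℝ (Fin N)) {r : ℝ} (hr : 0 < r)
    (φ : EuclideanSpace ℝ (Fin N) → ℝ≥0∞) :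
    ∫⁻ x in {a}ᶜ, φ x =
      ∫⁻ x in {a}ᶜ, ENNReal.ofReal ((r / ‖x - a‖) ^ (2 * (N : ℝ))) * φ (inversion a r x) := by
  have hs : MeasurableSet ({a}ᶜ : Set (EuclideanSpace ℝ (Fin N))) :=
    (measurableSet_singleton a).compl
  have hinv := inversion_involutive a hr.ne'
  have himg : inversion a r '' ({a}ᶜ : Set (EuclideanSpace ℝ (Fin N))) = {a}ᶜ := by
    ext y
    simp only [Set.mem_image, Set.mem_compl_iff, Set.mem_singleton_iff]
    constructor
    · rintro ⟨z, hz, rfl⟩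
      exact fun h => hz ((inversion_eq_center hr.ne').mp h)
    · intro hy
      exact ⟨inversion a r y, fun h => hy ((inversion_eq_center hr.ne').mp h), hinv y⟩
  have hder : ∀ x ∈ ({a}ᶜ : Set (EuclideanSpace ℝ (Fin N))),
      HasFDerivWithinAt (inversion a r)
        ((r / dist x a) ^ 2 • (Submodule.reflection (ℝ ∙ (x - a))ᗮ :
          EuclideanSpace ℝ (Fin N) →L[ℝ] EuclideanSpace ℝ (Fin N))) {a}ᶜ x :=
    fun x hx => (hasFDerivAt_inversion hx).hasFDerivWithinAt
  calc ∫⁻ x in {a}ᶜ, φ x = ∫⁻ x in inversion a r '' {a}ᶜ, φ x := by rw [himg]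
    _ = ∫⁻ x in {a}ᶜ, ENNReal.ofReal
          |(((r / dist x a) ^ 2 • (Submodule.reflection (ℝ ∙ (x - a))ᗮ :
            EuclideanSpace ℝ (Fin N) →L[ℝ] EuclideanSpace ℝ (Fin N)))).det| *
          φ (inversion a r x) :=
      lintegral_image_eq_lintegral_abs_det_fderiv_mul volume hs hder hinv.injective.injOn φ
    _ = _ := by
      refine setLIntegral_congr_fun hs (fun x hx => ?_)
      rw [inversion_absDet a hr hx, ← Real.rpow_natCast (r / ‖x - a‖) (2 * N)]
      norm_num

lemma inversion_dist_ofReal {N : ℕ} (a : EuclideanSpace ℝ (Fin N)) {r lam : ℝ} (hr : 0 < r)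
    {x y : EuclideanSpace ℝ (Fin N)} (hx : x ≠ a) (hy : y ≠ a) :
    ENNReal.ofReal (‖inversion a r x - inversion a r y‖ ^ (-lam)) =
      ENNReal.ofReal ((r / ‖x - a‖) ^ (-lam)) *
        (ENNReal.ofReal ((r / ‖y - a‖) ^ (-lam)) * ENNReal.ofReal (‖x - y‖ ^ (-lam))) := by
  have hdx : (0:ℝ) < ‖x - a‖ := norm_sub_pos_iff.2 hx
  have hdy : (0:ℝ) < ‖y - a‖ := norm_sub_pos_iff.2 hy
  have hd : ‖inversion a r x - inversion a r y‖ =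
      r / ‖x - a‖ * (r / ‖y - a‖ * ‖x - y‖) := by
    rw [← dist_eq_norm, dist_inversion_inversion hx hy r, dist_eq_norm, dist_eq_norm,
      dist_eq_norm]
    field_simp
  rw [hd, Real.mul_rpow (div_nonneg hr.le hdx.le)
      (mul_nonneg (div_nonneg hr.le hdy.le) (norm_nonneg _)),
    Real.mul_rpow (div_nonneg hr.le hdy.le) (norm_nonneg _),
    ENNReal.ofReal_mul (Real.rpow_nonneg (div_nonneg hr.le hdx.le) _),
    ENNReal.ofReal_mul (Real.rpow_nonneg (div_nonneg hr.le hdy.le) _)]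

end Aux

theorem conformal_invariance_inversion (N : ℕ) (hN : 1 ≤ N) (lam : ℝ)
    (hl : 0 < lam) (hlN : lam < N)
    (a : EuclideanSpace ℝ (Fin N)) (r : ℝ) (hr : 0 < r)
    (f g : EuclideanSpace ℝ (Fin N) → ℝ≥0∞) (hf : Measurable f) (hg : Measurable g) :
    ∫⁻ x, ∫⁻ y, invLift lam a r f x * invLift lam a r g y * ENNReal.ofReal (‖x - y‖ ^ (-lam)) =
      ∫⁻ x, ∫⁻ y, f x * g y * ENNReal.ofReal (‖x - y‖ ^ (-lam)) := by
  classical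
  haveI : Inhabited (Fin N) := ⟨⟨0, hN⟩⟩
  haveI : Nontrivial (EuclideanSpace ℝ (Fin N)) := inferInstance
  have hs : MeasurableSet ({a}ᶜ : Set (EuclideanSpace ℝ (Fin N))) :=
    (measurableSet_singleton a).compl
  have hres : ∀ F : EuclideanSpace ℝ (Fin N) → ℝ≥0∞,
      ∫⁻ x, F x = ∫⁻ x in {a}ᶜ, F x := by
    intro F
    rw [← setLIntegral_univ]
    refine setLIntegral_congr (MeasureTheory.ae_eq_univ.2 ?_).symm
    rw [compl_compl]
    exact measure_singleton a
  have hpt : ∀ x : EuclideanSpace ℝ (Fin N), x ≠ a → ∀ y : EuclideanSpace ℝ (Fin N), y ≠ a →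
      ENNReal.ofReal ((r / ‖x - a‖) ^ (2 * (N : ℝ))) *
        (ENNReal.ofReal ((r / ‖y - a‖) ^ (2 * (N : ℝ))) *
          (f (EuclideanGeometry.inversion a r x) * g (EuclideanGeometry.inversion a r y) *
            ENNReal.ofReal
              (‖EuclideanGeometry.inversion a r x - EuclideanGeometry.inversion a r y‖ ^
                (-lam)))) =
      invLift lam a r f x * invLift lam a r g y * ENNReal.ofReal (‖x - y‖ ^ (-lam)) := by
    intro x hx y hy
    have hdx : (0:ℝ) < ‖x - a‖ := norm_sub_pos_iff.2 hx
    have hdy : (0:ℝ) < ‖y - a‖ := norm_sub_pos_iff.2 hy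
    have htx : (0:ℝ) < r / ‖x - a‖ := div_pos hr hdx
    have hty : (0:ℝ) < r / ‖y - a‖ := div_pos hr hdy
    have e1 : ENNReal.ofReal ((r / ‖x - a‖) ^ (2 * (N : ℝ))) *
        ENNReal.ofReal ((r / ‖x - a‖) ^ (-lam)) =
        ENNReal.ofReal ((r / ‖x - a‖) ^ (2 * (N : ℝ) - lam)) := by
      rw [← ENNReal.ofReal_mul (Real.rpow_nonneg htx.le _), ← Real.rpow_add htx,
        ← sub_eq_add_neg]
    have e2 : ENNReal.ofReal ((r / ‖y - a‖) ^ (2 * (N : ℝ))) *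
        ENNReal.ofReal ((r / ‖y - a‖) ^ (-lam)) =
        ENNReal.ofReal ((r / ‖y - a‖) ^ (2 * (N : ℝ) - lam)) := by
      rw [← ENNReal.ofReal_mul (Real.rpow_nonneg hty.le _), ← Real.rpow_add hty,
        ← sub_eq_add_neg]
    rw [inversion_dist_ofReal a hr hx hy]
    simp only [invLift, sphereInv_eq_inversion]
    rw [← e1, ← e2]
    ring
  have key : ∫⁻ x in {a}ᶜ, ∫⁻ y in {a}ᶜ, f x * g y * ENNReal.ofReal (‖x - y‖ ^ (-lam)) =
      ∫⁻ x in {a}ᶜ, ∫⁻ y in {a}ᶜ,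
        invLift lam a r f x * invLift lam a r g y * ENNReal.ofReal (‖x - y‖ ^ (-lam)) := by
    calc ∫⁻ x in {a}ᶜ, ∫⁻ y in {a}ᶜ, f x * g y * ENNReal.ofReal (‖x - y‖ ^ (-lam))
        = ∫⁻ x in {a}ᶜ, ∫⁻ y in {a}ᶜ,
            ENNReal.ofReal ((r / ‖y - a‖) ^ (2 * (N : ℝ))) *
              (f x * g (EuclideanGeometry.inversion a r y) *
                ENNReal.ofReal (‖x - EuclideanGeometry.inversion a r y‖ ^ (-lam))) :=
          lintegral_congr fun x => inversion_cov a hr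
            (fun y => f x * g y * ENNReal.ofReal (‖x - y‖ ^ (-lam)))
      _ = ∫⁻ x in {a}ᶜ, ENNReal.ofReal ((r / ‖x - a‖) ^ (2 * (N : ℝ))) *
            ∫⁻ y in {a}ᶜ, ENNReal.ofReal ((r / ‖y - a‖) ^ (2 * (N : ℝ))) *
              (f (EuclideanGeometry.inversion a r x) * g (EuclideanGeometry.inversion a r y) *
                ENNReal.ofReal
                  (‖EuclideanGeometry.inversion a r x -
                      EuclideanGeometry.inversion a r y‖ ^ (-lam))) :=
          inversion_cov a hr (fun x => ∫⁻ y in {a}ᶜ,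
            ENNReal.ofReal ((r / ‖y - a‖) ^ (2 * (N : ℝ))) *
              (f x * g (EuclideanGeometry.inversion a r y) *
                ENNReal.ofReal (‖x - EuclideanGeometry.inversion a r y‖ ^ (-lam))))
      _ = ∫⁻ x in {a}ᶜ, ∫⁻ y in {a}ᶜ,
            invLift lam a r f x * invLift lam a r g y * ENNReal.ofReal (‖x - y‖ ^ (-lam)) := by
          refine setLIntegral_congr_fun hs (fun x hx => ?_)
          rw [← lintegral_const_mul' _ _ ENNReal.ofReal_ne_top]
          refine setLIntegral_congr_fun hs (fun y hy => ?_)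
          exact hpt x hx y hy
  calc ∫⁻ x, ∫⁻ y, invLift lam a r f x * invLift lam a r g y *
        ENNReal.ofReal (‖x - y‖ ^ (-lam))
      = ∫⁻ x in {a}ᶜ, ∫⁻ y in {a}ᶜ,
          invLift lam a r f x * invLift lam a r g y * ENNReal.ofReal (‖x - y‖ ^ (-lam)) :=
        (hres _).trans (lintegral_congr fun x => hres _)
    _ = ∫⁻ x in {a}ᶜ, ∫⁻ y in {a}ᶜ, f x * g y * ENNReal.ofReal (‖x - y‖ ^ (-lam)) := key.symm
    _ = ∫⁻ x, ∫⁻ y, f x * g y * ENNReal.ofReal (‖x - y‖ ^ (-lam)) :=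
        ((hres _).trans (lintegral_congr fun x => hres _)).symm
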